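/- Let A ⊆ ℝⁿ be nonempty and reflection-invariant, B := A ∩ ℝ≥0ⁿ, and x ∈ ℝⁿ. If p is a best approximation to |x| from B and s ∈ {±1}ⁿ is defined by s_i = 1 if x_i ≥ 0 and s_i = −1 otherwise, then s ⊙ p is a best approximation to x from A. -/

import Mathlib

noncomputable section

def projSet {n : ℕ} (M : Set (EuclideanSpace ℝ (Fin n))) (x : EuclideanSpace ℝ (Fin n)) :
    Set (EuclideanSpace ℝ (Fin n)) :=
  {p | p ∈ M ∧ ∀ q ∈ M, ‖p - x‖ ≤ ‖q - x‖}

def ReflInvariant {n : ℕ} (M : Set (EuclideanSpace ℝ (Fin n))) : Prop :=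
  ∀ x ∈ M, ∀ b : Fin n → ℝ, (∀ i, b i = 1 ∨ b i = -1) →
    (WithLp.toLp 2 (fun i => b i * x i) : EuclideanSpace ℝ (Fin n)) ∈ M

def toE {n : ℕ} (f : Fin n → ℝ) : EuclideanSpace ℝ (Fin n) := WithLp.toLp 2 f

@[simp] lemma toE_apply {n : ℕ} (f : Fin n → ℝ) (i : Fin n) : toE f i = f i := rfl

theorem signed_proj_onto_nonneg_part_is_proj
    {n : ℕ} (A : Set (EuclideanSpace ℝ (Fin n))) (hA : A.Nonempty)
    (hrefl : ReflInvariant A)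
    (B : Set (EuclideanSpace ℝ (Fin n)))
    (hB : B = A ∩ {y | ∀ i, 0 ≤ y i})
    (x p : EuclideanSpace ℝ (Fin n))
    (hp : p ∈ projSet B (WithLp.toLp 2 (fun i => |x i|) : EuclideanSpace ℝ (Fin n)))
    (s : Fin n → ℝ) (hs : ∀ i, s i = if 0 ≤ x i then 1 else -1) :
    (WithLp.toLp 2 (fun i => s i * p i) : EuclideanSpace ℝ (Fin n)) ∈ projSet A x := by
  subst hB
  have key : ∀ (a b : EuclideanSpace ℝ (Fin n)), (∀ i, |a i| ≤ |b i|) → ‖a‖ ≤ ‖b‖ := by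
    intro a b h
    rw [EuclideanSpace.norm_eq, EuclideanSpace.norm_eq]
    apply Real.sqrt_le_sqrt
    apply Finset.sum_le_sum
    intro i _
    simp only [Real.norm_eq_abs]
    exact pow_le_pow_left₀ (abs_nonneg _) (h i) 2
  have hss : ∀ i, s i = 1 ∨ s i = -1 := by
    intro i; rw [hs i]; split <;> simp
  have hsx : ∀ i, s i * |x i| = x i := by
    intro i; rw [hs i]; rcases le_or_gt 0 (x i) with h | h
    · simp [h, abs_of_nonneg h]
    · simp [not_le.2 h, abs_of_neg h]
  have hsabs : ∀ i, |s i| = 1 := by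
    intro i; rcases hss i with h | h <;> simp [h]
  obtain ⟨⟨hpA, hpnn⟩, hpmin⟩ := hp
  refine ⟨hrefl p hpA s hss, ?_⟩
  intro q hq
  set b : Fin n → ℝ := fun i => if 0 ≤ q i then 1 else -1 with hbdef
  have hbs : ∀ i, b i = 1 ∨ b i = -1 := by
    intro i; simp only [hbdef]; split <;> simp
  have hbq : ∀ i, b i * q i = |q i| := by
    intro i; simp only [hbdef]; rcases le_or_gt 0 (q i) with h | h
    · simp [h, abs_of_nonneg h]
    · simp [not_le.2 h, abs_of_neg h]
  have habq : (WithLp.toLp 2 (fun i => |q i|) : EuclideanSpace ℝ (Fin n)) ∈ A ∩ {y | ∀ i, 0 ≤ y i} := by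
    constructor
    · have := hrefl q hq b hbs
      convert this using 1; ext i; exact (hbq i).symm
    · intro i; exact abs_nonneg _
  have h1 : ‖toE (fun i => s i * p i) - x‖ = ‖p - toE (fun i => |x i|)‖ := by
    have hpt : ∀ i, |s i * p i - x i| = abs (p i - abs (x i)) := by
      intro i
      have : s i * p i - x i = s i * (p i - |x i|) := by
        rw [mul_sub, hsx i]
      rw [this, abs_mul, hsabs i, one_mul]
    apply le_antisymm
    · apply key; intro i
      simp only [PiLp.sub_apply, toE_apply]
      exact (hpt i).le
    · apply key; intro i
      simp only [PiLp.sub_apply, toE_apply]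
      exact (hpt i).ge
  have h2 : ‖toE (fun i => |q i|) - toE (fun i => |x i|)‖ ≤ ‖q - x‖ := by
    apply key; intro i
    simp only [PiLp.sub_apply, toE_apply]
    exact abs_abs_sub_abs_le_abs_sub (q i) (x i)
  exact h1.le.trans ((hpmin (toE fun i => |q i|) habq).trans h2)

end
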